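/- Let q : ℝⁿ → ℝ be a polynomial of total degree at most d, ν ≠ 0 real, j, k positive integers, and λ := ⌈(d-1)/(2j)⌉. Then Q := Σ_{p=0}^{λ} (-1)^p C(k+p-1, p) ν^(-(p+k)) Δ^(jp) q satisfies (Δ^j + ν)^k Q = q. -/

import Mathlib

open MvPolynomial

private lemma totalDegree_pderiv_le' {σ : Type*} [DecidableEq σ] (i : σ)
    (p : MvPolynomial σ ℝ) : ((pderiv i) p).totalDegree ≤ p.totalDegree - 1 := by
  conv_lhs => rw [p.as_sum]
  rw [map_sum]
  refine (totalDegree_finset_sum _ _).trans (Finset.sup_le fun m hm => ?_)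
  rw [pderiv_monomial]
  by_cases h : m i = 0
  · simp [h]
  · refine (totalDegree_monomial_le _ _).trans ?_
    have h1 : Finsupp.single i 1 ≤ m := Finsupp.single_le_iff.mpr (by omega)
    have hsum : ((m - Finsupp.single i 1) + Finsupp.single i 1).sum (fun _ e => e)
        = (m - Finsupp.single i 1).sum (fun _ e => e) + 1 := by
      rw [Finsupp.sum_add_index' (fun _ => rfl) (fun _ _ _ => rfl),
        Finsupp.sum_single_index rfl]
    have hle : (m - Finsupp.single i 1).sum (fun _ e => e) + 1 ≤ p.totalDegree := by
      rw [← hsum, tsub_add_cancel_of_le h1]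
      exact le_totalDegree hm
    exact Nat.le_sub_one_of_lt hle

private lemma pderiv_eq_zero_of_deg0 {σ : Type*} [DecidableEq σ] (i : σ)
    (p : MvPolynomial σ ℝ) (h : p.totalDegree = 0) : (pderiv i) p = 0 := by
  conv_lhs => rw [p.as_sum]
  rw [map_sum]
  refine Finset.sum_eq_zero fun m hm => ?_
  rw [pderiv_monomial]
  have := (totalDegree_eq_zero_iff σ p).mp h m hm i
  simp [this]

private lemma delta_low {n : ℕ} (r : MvPolynomial (Fin n) ℝ) (h : r.totalDegree ≤ 1) :
    (∑ i, (pderiv i).toLinearMap ∘ₗ (pderiv i).toLinearMap :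
      Module.End ℝ (MvPolynomial (Fin n) ℝ)) r = 0 := by
  rw [LinearMap.sum_apply]
  refine Finset.sum_eq_zero fun i _ => ?_
  have h1 : ((pderiv i) r).totalDegree = 0 := by
    have := totalDegree_pderiv_le' i r; omega
  simp [LinearMap.comp_apply, pderiv_eq_zero_of_deg0 i _ h1]

private lemma delta_deg {n : ℕ} (r : MvPolynomial (Fin n) ℝ) :
    (((∑ i, (pderiv i).toLinearMap ∘ₗ (pderiv i).toLinearMap :
      Module.End ℝ (MvPolynomial (Fin n) ℝ))) r).totalDegree ≤ r.totalDegree - 2 := by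
  rw [LinearMap.sum_apply]
  refine (totalDegree_finset_sum _ _).trans (Finset.sup_le fun i _ => ?_)
  have h1 := totalDegree_pderiv_le' i ((pderiv i) r)
  have h2 := totalDegree_pderiv_le' i r
  simp only [LinearMap.comp_apply, Derivation.coeFn_coe] at *
  omega

private lemma delta_pow_zero {n : ℕ} (m : ℕ) (r : MvPolynomial (Fin n) ℝ)
    (h : r.totalDegree < 2 * m) :
    (((∑ i, (pderiv i).toLinearMap ∘ₗ (pderiv i).toLinearMap :
      Module.End ℝ (MvPolynomial (Fin n) ℝ))) ^ m) r = 0 := by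
  induction m generalizing r with
  | zero => omega
  | succ m ih =>
    rw [pow_succ, Module.End.mul_apply]
    by_cases hr : r.totalDegree ≤ 1
    · rw [delta_low r hr, map_zero]
    · exact ih _ (by have := delta_deg r; omega)

private lemma scalar_zero (ν : ℝ) (hν : ν ≠ 0) (k : ℕ) :
    (-1:ℝ)^0 * ((k + 0 - 1).choose 0 : ℝ) * ν ^ (-((0:ℕ) + k : ℤ))
      = ν * ((-1:ℝ)^0 * ((k + 1 + 0 - 1).choose 0 : ℝ) * ν ^ (-((0:ℕ) + (k+1:ℕ) : ℤ))) := by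
  simp only [pow_zero, Nat.choose_zero_right, Nat.cast_one, one_mul, mul_one]
  rw [mul_comm, ← zpow_add_one₀ hν]
  congr 1
  push_cast
  ring

private lemma scalar_succ (ν : ℝ) (hν : ν ≠ 0) (k p : ℕ) :
    (-1:ℝ)^p * ((k + 1 + p - 1).choose p : ℝ) * ν ^ (-(p + (k+1:ℕ) : ℤ))
      + ν * ((-1:ℝ)^(p+1) * ((k + 1 + (p+1) - 1).choose (p+1) : ℝ)
          * ν ^ (-((p+1:ℕ) + (k+1:ℕ) : ℤ)))
    = (-1:ℝ)^(p+1) * ((k + (p+1) - 1).choose (p+1) : ℝ) * ν ^ (-((p+1:ℕ) + k : ℤ)) := by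
  have e1 : k + 1 + p - 1 = k + p := by omega
  have e2 : k + 1 + (p + 1) - 1 = (k + p) + 1 := by omega
  have e3 : k + (p + 1) - 1 = k + p := by omega
  rw [e1, e2, e3, Nat.choose_succ_succ]
  have h1 : ν ^ (-(↑p + (↑(k+1):ℤ))) = ν ^ (-((↑(p+1):ℤ) + ↑k)) := by
    congr 1; push_cast; ring
  have h2 : ν ^ (-((↑(p+1):ℤ) + (↑(k+1):ℤ))) = ν ^ (-((↑(p+1):ℤ) + ↑k)) / ν := by
    rw [eq_div_iff hν, ← zpow_add_one₀ hν]; congr 1; push_cast; ring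
  rw [h1, h2]
  field_simp
  simp only [Nat.succ_eq_add_one, add_comm 1 p]
  push_cast
  ring

private lemma expand_apply {M : Type*} [AddCommGroup M] [Module ℝ M]
    (A : Module.End ℝ M) (q : M) (ν : ℝ) (lam : ℕ) (c : ℕ → ℝ) :
    (A + ν • (1 : Module.End ℝ M)) (∑ p ∈ Finset.range (lam + 1), c p • (A ^ p) q)
      = (∑ p ∈ Finset.range (lam + 1), c p • (A ^ (p+1)) q)
        + ∑ p ∈ Finset.range (lam + 1), (ν * c p) • (A ^ p) q := by
  rw [LinearMap.add_apply, map_sum, LinearMap.smul_apply, Module.End.one_apply,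
    Finset.smul_sum]
  congr 1
  · refine Finset.sum_congr rfl fun p _ => ?_
    rw [map_smul, ← Module.End.mul_apply, ← pow_succ']
  · refine Finset.sum_congr rfl fun p _ => ?_
    rw [smul_smul]

private lemma step_lemma {M : Type*} [AddCommGroup M] [Module ℝ M]
    (A : Module.End ℝ M) (q : M) (ν : ℝ) (hν : ν ≠ 0) (lam : ℕ)
    (h0 : (A ^ (lam + 1)) q = 0) (k : ℕ) :
    (A + ν • (1 : Module.End ℝ M))
      (∑ p ∈ Finset.range (lam + 1),
        ((-1:ℝ)^p * ((k + 1 + p - 1).choose p : ℝ) * ν ^ (-(p + (k+1:ℕ) : ℤ))) • (A ^ p) q)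
    = ∑ p ∈ Finset.range (lam + 1),
        ((-1:ℝ)^p * ((k + p - 1).choose p : ℝ) * ν ^ (-(p + k : ℤ))) • (A ^ p) q := by
  rw [expand_apply]
  rw [Finset.sum_range_succ
    (fun p => ((-1:ℝ)^p * ((k + 1 + p - 1).choose p : ℝ) * ν ^ (-(p + (k+1:ℕ) : ℤ))) • (A ^ (p+1)) q) lam]
  rw [h0, smul_zero, add_zero]
  conv_rhs => rw [Finset.sum_range_succ']
  conv_lhs => rw [Finset.sum_range_succ'
    (fun p => (ν * ((-1:ℝ)^p * ((k + 1 + p - 1).choose p : ℝ) * ν ^ (-(p + (k+1:ℕ) : ℤ)))) • (A ^ p) q) lam]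
  rw [← add_assoc, ← Finset.sum_add_distrib]
  congr 1
  · refine Finset.sum_congr rfl fun p _ => ?_
    rw [← add_smul, scalar_succ ν hν k p]
  · rw [← scalar_zero ν hν k]

private lemma key_lemma {M : Type*} [AddCommGroup M] [Module ℝ M]
    (A : Module.End ℝ M) (q : M) (ν : ℝ) (hν : ν ≠ 0) (lam : ℕ)
    (h0 : (A ^ (lam + 1)) q = 0) (k : ℕ) :
    ((A + ν • (1 : Module.End ℝ M)) ^ k)
      (∑ p ∈ Finset.range (lam + 1),
        ((-1:ℝ)^p * ((k + p - 1).choose p : ℝ) * ν ^ (-(p + k : ℤ))) • (A ^ p) q) = q := by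
  induction k with
  | zero =>
    rw [pow_zero, Module.End.one_apply, Finset.sum_eq_single 0]
    · simp
    · intro p _ hp
      simp only [zero_add]
      have : (p - 1).choose p = 0 := Nat.choose_eq_zero_of_lt (by omega)
      simp [this]
    · intro h
      exact absurd (Finset.mem_range.mpr (Nat.succ_pos _)) h
  | succ k ih =>
    rw [pow_succ, Module.End.mul_apply, step_lemma A q ν hν lam h0 k, ih]




/-- Generalized Helmholtz equation `(Δ^j + ν)^k Q = q` for a polynomial `q` on ℝⁿ
of total degree at most `d`: with `λ = ⌈(d-1)/(2j)⌉`,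
`Q := ∑_{p=0}^{λ} (-1)^p C(k+p-1,p) ν^{-(p+k)} Δ^{jp} q` is a particular solution. -/
theorem generalized_helmholtz_polynomial_solution (n d j k : ℕ) (hj : 1 ≤ j) (hk : 1 ≤ k)
    (ν : ℝ) (hν : ν ≠ 0)
    (q : MvPolynomial (Fin n) ℝ) (hq : q.totalDegree ≤ d) :
    let Δ : Module.End ℝ (MvPolynomial (Fin n) ℝ) :=
      ∑ i, (MvPolynomial.pderiv i).toLinearMap ∘ₗ (MvPolynomial.pderiv i).toLinearMap
    let lam : ℕ := (d - 1 + (2 * j - 1)) / (2 * j)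
    let Q : MvPolynomial (Fin n) ℝ :=
      ∑ p ∈ Finset.range (lam + 1),
        ((-1 : ℝ) ^ p * ((k + p - 1).choose p : ℝ) * ν ^ (-(p + k : ℤ))) • (Δ ^ (j * p)) q
    ((Δ ^ j + ν • (1 : Module.End ℝ (MvPolynomial (Fin n) ℝ))) ^ k) Q = q := by
  intro Δ lam Q
  have h0 : ((Δ ^ j) ^ (lam + 1)) q = 0 := by
    rw [← pow_mul]
    apply delta_pow_zero
    have h1 : (d - 1 + (2 * j - 1)) % (2 * j) < 2 * j := Nat.mod_lt _ (by omega)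
    have h2 := Nat.div_add_mod (d - 1 + (2 * j - 1)) (2 * j)
    have h3 : 2 * (j * (lam + 1)) = 2 * j * ((d - 1 + (2 * j - 1)) / (2 * j)) + 2 * j := by
      show 2 * (j * (((d - 1 + (2 * j - 1)) / (2 * j)) + 1)) = _
      ring
    omega
  have hQ : Q = ∑ p ∈ Finset.range (lam + 1),
      ((-1 : ℝ) ^ p * ((k + p - 1).choose p : ℝ) * ν ^ (-(p + k : ℤ))) • ((Δ ^ j) ^ p) q := by
    show (∑ p ∈ Finset.range (lam + 1),
      ((-1 : ℝ) ^ p * ((k + p - 1).choose p : ℝ) * ν ^ (-(p + k : ℤ))) • (Δ ^ (j * p)) q) = _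
    refine Finset.sum_congr rfl fun p _ => ?_
    rw [pow_mul]
  rw [hQ]
  exact key_lemma (Δ ^ j) q ν hν lam h0 k
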